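/- Let d be a fixed positive integer. Then the sequence α_n^d / n^d converges to 1 as n → ∞; that is, the sequence {α_n^d} is asymptotically equivalent to {n^d}. Moreover, there exist a constant K > 0 and an integer N such that |α_n^d − n^d + (2^d − 1)·n^{d−1}| ≤ K·n^{d−2} for all n ≥ N. -/

import Mathlib

/-- A tuple `v : Fin d → ZMod n` is zero-sum-free if no non-empty subset of its
components sums to zero in `ZMod n`. -/
def ZeroSumFree {n d : ℕ} (v : Fin d → ZMod n) : Prop :=
  ∀ S : Finset (Fin d), S.Nonempty → ∑ i ∈ S, v i ≠ 0

/-- `alphaZSF n d` is the number of zero-sum-free `d`-tuples in `(ZMod n)^d`. -/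
noncomputable def alphaZSF (n d : ℕ) : ℕ :=
  Nat.card {v : Fin d → ZMod n // ZeroSumFree v}

/-- A tuple is irreducible if `gcd(v₁, ..., v_d, n) = 1`, where components are
identified with their representatives in `{0, 1, ..., n-1}`. -/
def IrreducibleTuple {n d : ℕ} (v : Fin d → ZMod n) : Prop :=
  Nat.gcd (Finset.univ.gcd fun i => (v i).val) n = 1

/-- `betaZSF n d` is the number of irreducible zero-sum-free `d`-tuples in `(ZMod n)^d`. -/
noncomputable def betaZSF (n d : ℕ) : ℕ :=
  Nat.card {v : Fin d → ZMod n // ZeroSumFree v ∧ IrreducibleTuple v}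

open Finset in
lemma bonferroni {ι V : Type*} [DecidableEq ι] [DecidableEq V] (A : ι → Finset V) (F : Finset ι) :
    ∑ S ∈ F, #(A S) ≤ #(F.biUnion A) + ∑ S ∈ F, ∑ T ∈ F.erase S, #(A S ∩ A T) := by
  induction F using Finset.induction_on with
  | empty => simp
  | @insert a F ha ih =>
    rw [Finset.sum_insert ha, Finset.biUnion_insert]
    have f1 : #(A a ∪ F.biUnion A) + #(A a ∩ F.biUnion A) = #(A a) + #(F.biUnion A) :=
      Finset.card_union_add_card_inter _ _
    have f2 : #(A a ∩ F.biUnion A) ≤ ∑ T ∈ F, #(A a ∩ A T) := by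
      have : A a ∩ F.biUnion A = F.biUnion (fun T => A a ∩ A T) := by
        ext v; simp [Finset.mem_biUnion, and_comm]
        tauto
      rw [this]; exact Finset.card_biUnion_le
    have f4 : ∑ S ∈ insert a F, ∑ T ∈ (insert a F).erase S, #(A S ∩ A T) =
        (∑ T ∈ F, #(A a ∩ A T)) + ∑ S ∈ F, (#(A S ∩ A a) + ∑ T ∈ F.erase S, #(A S ∩ A T)) := by
      rw [Finset.sum_insert ha, Finset.erase_insert ha]
      congr 1
      refine Finset.sum_congr rfl fun S hS => ?_
      have hSa : a ≠ S := fun h => ha (h ▸ hS)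
      rw [Finset.erase_insert_of_ne hSa, Finset.sum_insert (fun h => ha ((Finset.mem_erase.mp h).2))]
    have f5 : ∑ S ∈ F, (#(A S ∩ A a) + ∑ T ∈ F.erase S, #(A S ∩ A T)) ≥
        ∑ S ∈ F, ∑ T ∈ F.erase S, #(A S ∩ A T) :=
      Finset.sum_le_sum fun S _ => Nat.le_add_left _ _
    omega

open Finset in
lemma card_sum_zero (n d : ℕ) [NeZero n] (S : Finset (Fin d)) (hS : S.Nonempty) :
    #(Finset.univ.filter (fun v : Fin d → ZMod n => ∑ i ∈ S, v i = 0)) = n ^ (d - 1) := by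
  classical
  obtain ⟨j, hj⟩ := hS
  have hd : 0 < d := j.pos
  set φ : (Fin d → ZMod n) →+ ZMod n :=
    { toFun := fun v => ∑ i ∈ S, v i
      map_zero' := by simp
      map_add' := fun a b => by simp [Finset.sum_add_distrib] } with hφ
  have hsurj : Function.Surjective φ := by
    intro x
    refine ⟨fun i => if i = j then x else 0, ?_⟩
    simp only [hφ, AddMonoidHom.coe_mk, ZeroHom.coe_mk]
    rw [show (∑ i ∈ S, if i = j then x else 0) = ∑ i ∈ S, if i = j then (fun _ => x) i else 0 from rfl,
      Finset.sum_ite_eq' S j]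
    simp [hj]
  have h1 : Nat.card (Fin d → ZMod n) = n ^ d := by
    simp [Nat.card_eq_fintype_card, Fintype.card_fun, ZMod.card]
  have h2 : Nat.card ((Fin d → ZMod n) ⧸ φ.ker) = n := by
    rw [Nat.card_congr (QuotientAddGroup.quotientKerEquivOfSurjective φ hsurj).toEquiv]
    simp [Nat.card_eq_fintype_card, ZMod.card]
  have h3 := AddSubgroup.card_eq_card_quotient_mul_card_addSubgroup φ.ker
  rw [h1, h2] at h3
  have hker : Nat.card φ.ker = n ^ (d - 1) := by
    have hpow : n ^ d = n * n ^ (d - 1) := by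
      conv_lhs => rw [← Nat.sub_add_cancel hd]
      rw [pow_succ]; ring
    have hn : 0 < n := Nat.pos_of_ne_zero (NeZero.ne n)
    exact Nat.eq_of_mul_eq_mul_left hn (by omega)
  have h4 : Nat.card φ.ker = Nat.card {v : Fin d → ZMod n // ∑ i ∈ S, v i = 0} := by
    refine Nat.card_congr (Equiv.subtypeEquivRight fun v => ?_)
    simp [AddMonoidHom.mem_ker, hφ]
  rw [h4, Nat.card_eq_fintype_card, Fintype.card_subtype] at hker
  exact hker

open Finset in
lemma card_pair_le (n d : ℕ) [NeZero n] (S T : Finset (Fin d)) (i0 j0 : Fin d)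
    (hi0S : i0 ∈ S) (hi0T : i0 ∉ T) (hj0 : j0 ∈ T) :
    #(Finset.univ.filter (fun v : Fin d → ZMod n =>
        ∑ i ∈ S, v i = 0 ∧ ∑ i ∈ T, v i = 0)) ≤ n ^ (d - 2) := by
  classical
  have hij : i0 ≠ j0 := fun h => hi0T (h ▸ hj0)
  have hcard : Fintype.card ({i : Fin d // i ≠ i0 ∧ i ≠ j0} → ZMod n) = n ^ (d - 2) := by
    rw [Fintype.card_fun, ZMod.card]
    congr 1
    rw [Fintype.card_subtype]
    have : Finset.univ.filter (fun i : Fin d => i ≠ i0 ∧ i ≠ j0) = Finset.univ \ {i0, j0} := by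
      ext i; simp [not_or]
    rw [this, Finset.card_sdiff_of_subset (Finset.subset_univ _)]
    have : ({i0, j0} : Finset (Fin d)).card = 2 := by
      rw [Finset.card_insert_of_notMem (by simp [hij]), Finset.card_singleton]
    rw [this, Finset.card_univ, Fintype.card_fin]
  calc #(Finset.univ.filter (fun v : Fin d → ZMod n =>
        ∑ i ∈ S, v i = 0 ∧ ∑ i ∈ T, v i = 0))
      ≤ #(Finset.univ : Finset ({i : Fin d // i ≠ i0 ∧ i ≠ j0} → ZMod n)) := by
        apply Finset.card_le_card_of_injOn (fun v x => v x.1) (fun _ _ => Finset.mem_univ _)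
        intro v hv w hw h
        simp only [Finset.coe_filter, Set.mem_setOf_eq, Finset.mem_univ, true_and] at hv hw
        have hres : ∀ i : Fin d, i ≠ i0 → i ≠ j0 → v i = w i := by
          intro i h1 h2
          exact congrFun h ⟨i, h1, h2⟩
        have hvj0 : v j0 = w j0 := by
          have hrest : ∑ k ∈ T.erase j0, v k = ∑ k ∈ T.erase j0, w k := by
            refine Finset.sum_congr rfl fun k hk => ?_
            obtain ⟨hk1, hk2⟩ := Finset.mem_erase.mp hk
            exact hres k (fun e => hi0T (e ▸ hk2)) hk1
          have h1 := Finset.add_sum_erase T v hj0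
          have h2 := Finset.add_sum_erase T w hj0
          rw [hv.2] at h1; rw [hw.2] at h2
          rw [hrest] at h1
          rw [← h2] at h1
          exact add_right_cancel h1
        have hvi0 : v i0 = w i0 := by
          have hrest : ∑ k ∈ S.erase i0, v k = ∑ k ∈ S.erase i0, w k := by
            refine Finset.sum_congr rfl fun k hk => ?_
            obtain ⟨hk1, _⟩ := Finset.mem_erase.mp hk
            by_cases hk2 : k = j0
            · rw [hk2]; exact hvj0
            · exact hres k hk1 hk2
          have h1 := Finset.add_sum_erase S v hi0S
          have h2 := Finset.add_sum_erase S w hi0S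
          rw [hv.1] at h1; rw [hw.1] at h2
          rw [hrest] at h1
          rw [← h2] at h1
          exact add_right_cancel h1
        funext i
        by_cases h1 : i = i0
        · rw [h1]; exact hvi0
        by_cases h2 : i = j0
        · rw [h2]; exact hvj0
        · exact hres i h1 h2
    _ = n ^ (d - 2) := by rw [Finset.card_univ, hcard]

open Finset in
lemma alpha_bounds (n d : ℕ) (hd : 0 < d) [NeZero n] :
    alphaZSF n d ≤ n ^ d ∧
    n ^ d ≤ alphaZSF n d + (2 ^ d - 1) * n ^ (d - 1) ∧
    alphaZSF n d + (2 ^ d - 1) * n ^ (d - 1) ≤ n ^ d + (2 ^ d - 1) ^ 2 * n ^ (d - 2) := by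
  classical
  set A : Finset (Fin d) → Finset (Fin d → ZMod n) :=
    fun S => Finset.univ.filter (fun v => ∑ i ∈ S, v i = 0) with hA
  set 𝒮 : Finset (Finset (Fin d)) := Finset.univ.filter Finset.Nonempty with h𝒮
  have hScard : 𝒮.card = 2 ^ d - 1 := by
    have h : 𝒮 = Finset.univ \ {∅} := by
      ext S; simp [h𝒮, Finset.nonempty_iff_ne_empty]
    rw [h, Finset.card_sdiff_of_subset (by simp), Finset.card_univ, Fintype.card_finset,
      Fintype.card_fin, Finset.card_singleton]
  have huniv : #(Finset.univ : Finset (Fin d → ZMod n)) = n ^ d := by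
    rw [Finset.card_univ, Fintype.card_fun, ZMod.card, Fintype.card_fin]
  set U := 𝒮.biUnion A with hU
  have hαU : alphaZSF n d + #U = n ^ d := by
    have hfil : Finset.univ.filter (fun v : Fin d → ZMod n => ZeroSumFree v)
        = Finset.univ \ U := by
      ext v
      simp only [Finset.mem_filter, Finset.mem_univ, true_and, Finset.mem_sdiff, hU,
        Finset.mem_biUnion, h𝒮, hA, ZeroSumFree]
      push_neg
      exact ⟨fun h => ((@Finset.mem_filter _ (fun a => ZeroSumFree a) (fun a => Classical.propDecidable (ZeroSumFree a)) _ _).mp h).2, fun h => (@Finset.mem_filter _ (fun a => ZeroSumFree a) (fun a => Classical.propDecidable (ZeroSumFree a)) _ _).mpr ⟨Finset.mem_univ _, h⟩⟩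
    have hα : alphaZSF n d = #(Finset.univ.filter (fun v : Fin d → ZMod n => ZeroSumFree v)) := by
      rw [alphaZSF, Nat.card_eq_fintype_card, Fintype.card_subtype]
    rw [hα, hfil, ← huniv]
    exact Finset.card_sdiff_add_card_eq_card (Finset.subset_univ _)
  have hAcard : ∀ S ∈ 𝒮, #(A S) = n ^ (d - 1) := by
    intro S hS
    exact card_sum_zero n d S (by simpa [h𝒮] using hS)
  have hsum : ∑ S ∈ 𝒮, #(A S) = (2 ^ d - 1) * n ^ (d - 1) := by
    rw [Finset.sum_congr rfl hAcard, Finset.sum_const, smul_eq_mul, hScard]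
  have hUle : #U ≤ (2 ^ d - 1) * n ^ (d - 1) := by
    rw [hU, ← hsum]; exact Finset.card_biUnion_le
  have hpairbd : ∀ S ∈ 𝒮, ∀ T ∈ 𝒮.erase S, #(A S ∩ A T) ≤ n ^ (d - 2) := by
    intro S hS T hT
    have hTS : T ≠ S := (Finset.mem_erase.mp hT).1
    have hT𝒮 : T ∈ 𝒮 := (Finset.mem_erase.mp hT).2
    have hSne : S.Nonempty := by simpa [h𝒮] using hS
    have hTne : T.Nonempty := by simpa [h𝒮] using hT𝒮
    have hinter : A S ∩ A T = Finset.univ.filter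
        (fun v : Fin d → ZMod n => ∑ i ∈ S, v i = 0 ∧ ∑ i ∈ T, v i = 0) := by
      rw [hA]; rw [Finset.filter_and]
    by_cases hsub : S ⊆ T
    · have hns : ¬ T ⊆ S := fun h => hTS (Finset.Subset.antisymm h hsub)
      obtain ⟨i0, hi0T, hi0S⟩ := Finset.not_subset.mp hns
      obtain ⟨j0, hj0⟩ := hSne
      have heq : A S ∩ A T = Finset.univ.filter
          (fun v : Fin d → ZMod n => ∑ i ∈ T, v i = 0 ∧ ∑ i ∈ S, v i = 0) := by
        rw [hinter]; apply Finset.filter_congr; intro v _; exact and_comm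
      rw [heq]
      exact card_pair_le n d T S i0 j0 hi0T hi0S hj0
    · obtain ⟨i0, hi0S, hi0T⟩ := Finset.not_subset.mp hsub
      obtain ⟨j0, hj0⟩ := hTne
      rw [hinter]
      exact card_pair_le n d S T i0 j0 hi0S hi0T hj0
  have hpair : ∑ S ∈ 𝒮, ∑ T ∈ 𝒮.erase S, #(A S ∩ A T) ≤ (2 ^ d - 1) ^ 2 * n ^ (d - 2) := by
    calc ∑ S ∈ 𝒮, ∑ T ∈ 𝒮.erase S, #(A S ∩ A T)
        ≤ ∑ S ∈ 𝒮, ∑ T ∈ 𝒮.erase S, n ^ (d - 2) :=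
          Finset.sum_le_sum fun S hS => Finset.sum_le_sum fun T hT => hpairbd S hS T hT
      _ ≤ ∑ S ∈ 𝒮, (2 ^ d - 1) * n ^ (d - 2) := by
          refine Finset.sum_le_sum fun S hS => ?_
          rw [Finset.sum_const, smul_eq_mul]
          exact Nat.mul_le_mul_right _ (le_trans (Finset.card_erase_le) hScard.le)
      _ = (2 ^ d - 1) ^ 2 * n ^ (d - 2) := by
          rw [Finset.sum_const, smul_eq_mul, hScard]; ring
  have hbon := bonferroni A 𝒮
  rw [hsum, ← hU] at hbon
  omega


open Filter in
theorem alpha_asymptotic (d : ℕ) (hd : 0 < d) :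
    Filter.Tendsto (fun n : ℕ => (alphaZSF n d : ℝ) / (n : ℝ) ^ d) Filter.atTop (nhds 1) ∧
    ∃ K : ℝ, 0 < K ∧ ∃ N : ℕ, ∀ n : ℕ, N ≤ n →
      |(alphaZSF n d : ℝ) - (n : ℝ) ^ d + (2 ^ d - 1) * (n : ℝ) ^ (d - 1)| ≤
        K * (n : ℝ) ^ (d - 2) := by
  have h2d : (1 : ℕ) ≤ 2 ^ d := Nat.one_le_two_pow
  have hreal : ∀ n : ℕ, 1 ≤ n →
      (alphaZSF n d : ℝ) ≤ (n : ℝ) ^ d ∧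
      (n : ℝ) ^ d ≤ (alphaZSF n d : ℝ) + ((2 : ℝ) ^ d - 1) * (n : ℝ) ^ (d - 1) ∧
      (alphaZSF n d : ℝ) + ((2 : ℝ) ^ d - 1) * (n : ℝ) ^ (d - 1) ≤
        (n : ℝ) ^ d + ((2 : ℝ) ^ d - 1) ^ 2 * (n : ℝ) ^ (d - 2) := by
    intro n hn
    haveI : NeZero n := ⟨by omega⟩
    obtain ⟨k1, k2, k3⟩ := alpha_bounds n d hd
    refine ⟨by exact_mod_cast k1, ?_, ?_⟩
    · have h := (Nat.cast_le (α := ℝ)).mpr k2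
      push_cast [Nat.cast_sub h2d] at h
      linarith
    · have h := (Nat.cast_le (α := ℝ)).mpr k3
      push_cast [Nat.cast_sub h2d] at h
      linarith
  constructor
  · apply tendsto_of_tendsto_of_tendsto_of_le_of_le'
      (g := fun n : ℕ => 1 - ((2 : ℝ) ^ d - 1) / n) (h := fun _ : ℕ => (1 : ℝ))
    · have h0 := tendsto_const_div_atTop_nhds_zero_nat ((2 : ℝ) ^ d - 1)
      have h1 := (tendsto_const_nhds (x := (1 : ℝ)) (f := (atTop : Filter ℕ))).sub h0
      simpa using h1
    · exact tendsto_const_nhds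
    · filter_upwards [eventually_ge_atTop 1] with n hn
      have hn0 : (0 : ℝ) < n := by exact_mod_cast hn
      have hnd : (0 : ℝ) < (n : ℝ) ^ d := pow_pos hn0 d
      obtain ⟨_, k2, _⟩ := hreal n hn
      rw [le_div_iff₀ hnd]
      have hpow : (n : ℝ) ^ d = (n : ℝ) ^ (d - 1) * n := by
        conv_lhs => rw [← Nat.sub_add_cancel hd]
        rw [pow_succ]
      have hexp : (1 - ((2 : ℝ) ^ d - 1) / n) * (n : ℝ) ^ d =
          (n : ℝ) ^ d - ((2 : ℝ) ^ d - 1) * (n : ℝ) ^ (d - 1) := by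
        rw [hpow]; field_simp
      rw [hexp]
      linarith
    · filter_upwards [eventually_ge_atTop 1] with n hn
      obtain ⟨k1, _, _⟩ := hreal n hn
      have hn0 : (0 : ℝ) < n := by exact_mod_cast hn
      rw [div_le_one (pow_pos hn0 d)]
      exact k1
  · refine ⟨((2 : ℝ) ^ d - 1) ^ 2 + 1, by positivity, 1, fun n hn => ?_⟩
    obtain ⟨k1, k2, k3⟩ := hreal n hn
    have hnn : (0 : ℝ) ≤ (n : ℝ) ^ (d - 2) := by positivity
    rw [abs_of_nonneg (by linarith)]
    have hmul : ((2 : ℝ) ^ d - 1) ^ 2 * (n : ℝ) ^ (d - 2) ≤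
        (((2 : ℝ) ^ d - 1) ^ 2 + 1) * (n : ℝ) ^ (d - 2) :=
      mul_le_mul_of_nonneg_right (by linarith) hnn
    linarith
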